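/- Let Br be the Bratteli diagram with Br_0 = {v_0}, two vertices at each level n ≥ 1, exactly one arrow from v_0 to each vertex of level 1, and for n ≥ 1 exactly one 'straight' arrow from each level-n vertex to the level-(n+1) vertex on the same side with potential value 0, and one 'crossing' arrow to the opposite-side vertex with potential value n+1. Then the stochastic matrices \underline{Br(β)}^{(j)} for j ≥ 2 equal [[1/(1+e^{−βj}), e^{−βj}/(1+e^{−βj})],[e^{−βj}/(1+e^{−βj}), 1/(1+e^{−βj})]], the limit matrices \underline{Br}^{(j)} equal the identity for j ≥ 2, and Σ_{j=1}^∞ ‖\underline{Br(β)}^{(j)} − \underline{Br}^{(j)}‖_1 ≤ 2e^{−β}/(1 − e^{−β}) for β > 0; in particular this sum tends to 0 as β → ∞. -/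

import Mathlib

open scoped BigOperators

/-- A Bratteli diagram: finite nonempty level sets `V n`, arrows `E n` from level `n`
to level `n+1`, a single root at level `0`, no sinks, and no sources besides the root. -/
structure Bratteli where
  V : ℕ → Type
  E : ℕ → Type
  instVFin : ∀ n, Fintype (V n)
  instEFin : ∀ n, Fintype (E n)
  instVNe : ∀ n, Nonempty (V n)
  instRoot : Subsingleton (V 0)
  src : ∀ n, E n → V n
  rng : ∀ n, E n → V (n + 1)
  noSink : ∀ n (v : V n), ∃ e : E n, src n e = v
  noSource : ∀ n (v : V (n + 1)), ∃ e : E n, rng n e = v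

attribute [instance] Bratteli.instVFin Bratteli.instEFin Bratteli.instVNe Bratteli.instRoot

/-- Finite paths of length `n` starting at the root. -/
abbrev Bratteli.FinPath (B : Bratteli) (n : ℕ) :=
  { p : ∀ i : Fin n, B.E i.val //
    ∀ (i : ℕ) (h : i + 1 < n),
      B.rng i (p ⟨i, Nat.lt_of_succ_lt h⟩) = B.src (i + 1) (p ⟨i + 1, h⟩) }

/-- Infinite paths starting at the root. -/
structure Bratteli.InfPath (B : Bratteli) where
  arrow : ∀ n, B.E n
  compat : ∀ n, B.rng n (arrow n) = B.src (n + 1) (arrow (n + 1))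

/-- The initial segment `p[1,n]` of an infinite path. -/
def Bratteli.InfPath.take {B : Bratteli} (p : B.InfPath) (n : ℕ) : B.FinPath n :=
  ⟨fun i => p.arrow i.val, fun i _ => p.compat i⟩

/-- The endpoint (range) of a finite path of positive length. -/
def pend {B : Bratteli} {n : ℕ} (μ : B.FinPath (n + 1)) : B.V (n + 1) :=
  B.rng n (μ.1 ⟨n, Nat.lt_succ_self n⟩)

/-- The vertex at level `n` through which a path of length `n+1` passes. -/
def through {B : Bratteli} {n : ℕ} (μ : B.FinPath (n + 1)) : B.V n :=
  B.src n (μ.1 ⟨n, Nat.lt_succ_self n⟩)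

/-- The value `F(μ) = Σ_i F(a_i)` of a potential on a finite path. -/
noncomputable def pathVal {B : Bratteli} (F : ∀ n, B.E n → ℝ) {n : ℕ}
    (μ : B.FinPath n) : ℝ :=
  ∑ i : Fin n, F i.val (μ.1 i)

/-- An infinite path `p` from the root is an `F`-geodesic when for every `n`,
`F(p[1,n]) ≤ F(μ)` for every length-`n` path `μ` from the root with the same endpoint. -/
def IsGeodesic {B : Bratteli} (F : ∀ n, B.E n → ℝ) (p : B.InfPath) : Prop :=
  ∀ (n : ℕ) (μ : B.FinPath (n + 1)), pend μ = pend (p.take (n + 1)) →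
    pathVal F (p.take (n + 1)) ≤ pathVal F μ

open scoped Classical

/-- The left stochastic matrix `Br(β)^{(j)}` with entries
`(Σ_{μ ∈ P^w(v)} e^{−βF(μ)}) / (Σ_{ν ∈ P^w} e^{−βF(ν)})`, over paths of length `j+1`
from the root (so from level `j` to level `j+1` in the diagram). -/
noncomputable def stoch (B : Bratteli) (F : ∀ n, B.E n → ℝ) (β : ℝ) (j : ℕ) :
    Matrix (B.V j) (B.V (j + 1)) ℝ :=
  Matrix.of fun v w =>
    (∑ μ : {μ : B.FinPath (j + 1) // pend μ = w ∧ through μ = v},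
        Real.exp (-(β * pathVal F μ.1))) /
      ∑ μ : {μ : B.FinPath (j + 1) // pend μ = w}, Real.exp (-(β * pathVal F μ.1))

/-- The minimum `m_w` of the potential over paths from the root to `w`. -/
noncomputable def mmin (B : Bratteli) (F : ∀ n, B.E n → ℝ) (j : ℕ) (w : B.V (j + 1)) : ℝ :=
  sInf {x | ∃ μ : B.FinPath (j + 1), pend μ = w ∧ pathVal F μ = x}

/-- The limit matrix `\underline{Br}^{(j)}` with entries
`#{μ ∈ P^w(v) : F(μ) = m_w} / #{μ ∈ P^w : F(μ) = m_w}`. -/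
noncomputable def stochLim (B : Bratteli) (F : ∀ n, B.E n → ℝ) (j : ℕ) :
    Matrix (B.V j) (B.V (j + 1)) ℝ :=
  Matrix.of fun v w =>
    (Nat.card {μ : B.FinPath (j + 1) //
        pend μ = w ∧ through μ = v ∧ pathVal F μ = mmin B F j w} : ℝ) /
      (Nat.card {μ : B.FinPath (j + 1) // pend μ = w ∧ pathVal F μ = mmin B F j w} : ℝ)

/-- The operator norm induced by the `ℓ¹`-norms: the largest `ℓ¹`-norm of a column. -/
noncomputable def l1opNorm {m n : Type} [Fintype m] [Fintype n] (M : Matrix m n ℝ) : ℝ :=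
  ⨆ j : n, ∑ i : m, |M i j|

/-- Levels of the example diagram: one root, two vertices at every positive level. -/
def exV : ℕ → Type
  | 0 => PUnit
  | _ + 1 => Bool

/-- Arrows of the example diagram: one arrow from the root to each level-1 vertex;
from each vertex at level `n ≥ 1`, a straight arrow (`false`) and a crossing arrow
(`true`). -/
def exE : ℕ → Type
  | 0 => Bool
  | _ + 1 => Bool × Bool

def exVFin : ∀ n, Fintype (exV n)
  | 0 => inferInstanceAs (Fintype PUnit)
  | _ + 1 => inferInstanceAs (Fintype Bool)

def exEFin : ∀ n, Fintype (exE n)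
  | 0 => inferInstanceAs (Fintype Bool)
  | _ + 1 => inferInstanceAs (Fintype (Bool × Bool))

def exVNe : ∀ n, Nonempty (exV n)
  | 0 => ⟨PUnit.unit⟩
  | _ + 1 => ⟨true⟩

def exSrc : ∀ n, exE n → exV n
  | 0, _ => PUnit.unit
  | _ + 1, e => e.1

def exRng : ∀ n, exE n → exV (n + 1)
  | 0, b => b
  | _ + 1, e => cond e.2 (!e.1) e.1

/-- The example Bratteli diagram. -/
def exBr : Bratteli where
  V := exV
  E := exE
  instVFin := exVFin
  instEFin := exEFin
  instVNe := exVNe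
  instRoot := inferInstanceAs (Subsingleton PUnit)
  src := exSrc
  rng := exRng
  noSink := by
    intro n v
    cases n with
    | zero => exact ⟨true, rfl⟩
    | succ k => exact ⟨(v, false), rfl⟩
  noSource := by
    intro n v
    cases n with
    | zero => exact ⟨v, rfl⟩
    | succ k => exact ⟨(v, false), rfl⟩

/-- The potential: `0` on the arrows from the root and on straight arrows, and `n+1` on
the crossing arrow emitted from a vertex at level `n ≥ 1`. -/
noncomputable def exF : ∀ n, exBr.E n → ℝ
  | 0, _ => 0
  | k + 1, e => cond e.2 ((k + 2 : ℕ) : ℝ) 0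

namespace ExAux

/-- vertex at level `i+1` of the path with first vertex `b` and crossing bits `c`. -/
def vtx (b : Bool) (c : ℕ → Bool) : ℕ → Bool
  | 0 => b
  | i + 1 => cond (c i) (!(vtx b c i)) (vtx b c i)

def mkArrow (b : Bool) (c : ℕ → Bool) : (i : ℕ) → exE i
  | 0 => b
  | i + 1 => (vtx b c i, c i)

def mkPath (n : ℕ) (b : Bool) (c : ℕ → Bool) : exBr.FinPath (n + 1) :=
  ⟨fun i => mkArrow b c i.val, by
    intro i h
    cases i with
    | zero => rfl
    | succ j => rfl⟩

def base {n : ℕ} (μ : exBr.FinPath (n + 1)) : Bool := μ.1 ⟨0, Nat.succ_pos n⟩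

def bits {n : ℕ} (μ : exBr.FinPath (n + 1)) (i : Fin n) : Bool :=
  (μ.1 ⟨i.val + 1, Nat.succ_lt_succ i.isLt⟩ : Bool × Bool).2

def cext {n : ℕ} (c : Fin n → Bool) : ℕ → Bool :=
  fun i => if h : i < n then c ⟨i, h⟩ else false

lemma vtx_congr {c c' : ℕ → Bool} (b : Bool) {n : ℕ} (h : ∀ i < n, c i = c' i) :
    vtx b c n = vtx b c' n := by
  induction n with
  | zero => rfl
  | succ j ih =>
      have hj : ∀ i < j, c i = c' i := fun i hi => h i (Nat.lt_succ_of_lt hi)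
      simp only [vtx, ih hj, h j (Nat.lt_succ_self j)]

lemma mkPath_congr {c c' : ℕ → Bool} {b b' : Bool} {n : ℕ} (hb : b = b')
    (h : ∀ i < n, c i = c' i) : mkPath n b c = mkPath n b' c' := by
  subst hb
  apply Subtype.ext
  funext i
  rcases i with ⟨i, hi⟩
  cases i with
  | zero => rfl
  | succ j =>
      have hj : j < n := Nat.lt_of_succ_lt_succ hi
      show mkArrow b c (j+1) = mkArrow b c' (j+1)
      show ((vtx b c j, c j) : Bool × Bool) = (vtx b c' j, c' j)
      rw [vtx_congr b (fun i hi' => h i (lt_trans hi' hj)), h j hj]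

lemma fst_eq {n : ℕ} (μ : exBr.FinPath (n + 1)) :
    ∀ j, ∀ h : j + 1 < n + 1,
      (μ.1 ⟨j + 1, h⟩ : Bool × Bool).1 = vtx (base μ) (cext (bits μ)) j := by
  intro j
  induction j with
  | zero =>
      intro h
      have := (μ.2 0 h).symm
      exact this
  | succ j ih =>
      intro h
      have hcom := (μ.2 (j+1) h).symm
      have hj : j + 1 < n + 1 := Nat.lt_of_succ_lt h
      have h1 := ih hj
      have h2 : (μ.1 ⟨j + 1, hj⟩ : Bool × Bool).2 = cext (bits μ) j := by
        have hjn : j < n := Nat.lt_of_succ_lt_succ hj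
        simp only [cext, dif_pos hjn]
        rfl
      calc @Eq Bool (μ.1 ⟨j + 2, h⟩ : Bool × Bool).1 (id (α := Bool) (exRng (j+1) (μ.1 ⟨j + 1, hj⟩))) := hcom
        _ = cond (μ.1 ⟨j + 1, hj⟩ : Bool × Bool).2
              (!(μ.1 ⟨j + 1, hj⟩ : Bool × Bool).1)
              ((μ.1 ⟨j + 1, hj⟩ : Bool × Bool).1) := rfl
        _ = vtx (base μ) (cext (bits μ)) (j+1) := by rw [h1, h2]; rfl

lemma recon {n : ℕ} (μ : exBr.FinPath (n + 1)) :
    mkPath n (base μ) (cext (bits μ)) = μ := by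
  apply Subtype.ext
  funext i
  rcases i with ⟨i, hi⟩
  cases i with
  | zero => rfl
  | succ j =>
      have hjn : j < n := Nat.lt_of_succ_lt_succ hi
      show ((vtx (base μ) (cext (bits μ)) j, cext (bits μ) j) : Bool × Bool)
          = μ.1 ⟨j + 1, hi⟩
      have h1 := fst_eq μ j hi
      have h2 : cext (bits μ) j = (μ.1 ⟨j + 1, hi⟩ : Bool × Bool).2 := by
        simp only [cext, dif_pos hjn]; rfl
      rw [h2, ← h1]
      exact Prod.mk.eta

lemma pend_mkPath (n : ℕ) (b : Bool) (c : ℕ → Bool) :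
    pend (mkPath n b c) = vtx b c n := by
  cases n with
  | zero => rfl
  | succ j => rfl

lemma through_mkPath (k : ℕ) (b : Bool) (c : ℕ → Bool) :
    through (mkPath (k + 1) b c) = vtx b c k := rfl

lemma pathVal_mkPath (n : ℕ) (b : Bool) (c : ℕ → Bool) :
    pathVal exF (mkPath n b c) = ∑ i : Fin n, cond (c i.val) ((i.val + 2 : ℕ) : ℝ) 0 := by
  unfold pathVal
  rw [Fin.sum_univ_succ]
  have h0 : exF ((0 : Fin (n+1)) : ℕ) ((mkPath n b c).1 0) = 0 := rfl
  rw [h0, zero_add]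
  exact Finset.sum_congr rfl fun i _ => rfl

lemma vtx_eq_xor (b : Bool) (c : ℕ → Bool) (i : ℕ) :
    vtx b c i = xor b (vtx false c i) := by
  induction i with
  | zero => simp [vtx]
  | succ j ih => cases h : c j <;> cases b <;> simp_all [vtx]

lemma bits_mkPath {n : ℕ} (b : Bool) (c : ℕ → Bool) (i : Fin n) :
    bits (mkPath n b c) i = c i.val := rfl

lemma base_mkPath {n : ℕ} (b : Bool) (c : ℕ → Bool) :
    base (mkPath n b c) = b := rfl

end ExAux

namespace ExAux

lemma vtx_false (b : Bool) {c : ℕ → Bool} :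
    ∀ n, (∀ i < n, c i = false) → vtx b c n = b := by
  intro n
  induction n with
  | zero => intro _; rfl
  | succ j ih =>
      intro h
      simp only [vtx, h j (Nat.lt_succ_self j), ih fun i hi => h i (Nat.lt_succ_of_lt hi)]
      rfl

noncomputable def fiberEquiv (n : ℕ) (w : Bool) :
    {μ : exBr.FinPath (n + 1) // pend μ = w} ≃ (Fin n → Bool) where
  toFun μ := bits μ.1
  invFun c := ⟨mkPath n (xor w (vtx false (cext c) n)) (cext c), by
    rw [pend_mkPath, vtx_eq_xor]
    cases w <;> cases vtx false (cext c) n <;> rfl⟩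
  left_inv := by
    rintro ⟨μ, hμ⟩
    apply Subtype.ext
    show mkPath n (xor w (vtx false (cext (bits μ)) n)) (cext (bits μ)) = μ
    have hw : vtx (base μ) (cext (bits μ)) n = w := by
      rw [← pend_mkPath, recon μ, hμ]
    have hb : xor w (vtx false (cext (bits μ)) n) = base μ := by
      rw [← hw, vtx_eq_xor]
      cases base μ <;> cases vtx false (cext (bits μ)) n <;> rfl
    rw [hb]; exact recon μ
  right_inv := by
    intro c
    funext i
    show cext c i.val = c i
    simp [cext, i.isLt]

lemma pathVal_eq {n : ℕ} (μ : exBr.FinPath (n + 1)) :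
    pathVal exF μ = ∑ i : Fin n, cond (bits μ i) ((i.val + 2 : ℕ) : ℝ) 0 := by
  conv_lhs => rw [← recon μ]
  rw [pathVal_mkPath]
  refine Finset.sum_congr rfl fun i _ => ?_
  simp [cext, i.isLt]

set_option maxHeartbeats 1000000 in
lemma sum_exp_bits (n : ℕ) (β : ℝ) :
    ∑ c : Fin n → Bool,
        Real.exp (-(β * ∑ i : Fin n, cond (c i) ((i.val + 2 : ℕ) : ℝ) 0)) =
      ∏ i : Fin n, (1 + Real.exp (-(β * ((i.val + 2 : ℕ) : ℝ)))) := by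
  have h1 : ∀ c : Fin n → Bool,
      Real.exp (-(β * ∑ i : Fin n, cond (c i) ((i.val + 2 : ℕ) : ℝ) 0)) =
        ∏ i : Fin n, Real.exp (-(β * cond (c i) ((i.val + 2 : ℕ) : ℝ) 0)) := by
    intro c
    rw [← Real.exp_sum]
    congr 1
    rw [Finset.mul_sum, ← Finset.sum_neg_distrib]
  calc ∑ c : Fin n → Bool,
        Real.exp (-(β * ∑ i : Fin n, cond (c i) ((i.val + 2 : ℕ) : ℝ) 0))
      = ∑ c : Fin n → Bool,
          ∏ i : Fin n, Real.exp (-(β * cond (c i) ((i.val + 2 : ℕ) : ℝ) 0)) :=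
        Finset.sum_congr rfl fun c _ => h1 c
    _ = ∑ c ∈ Fintype.piFinset (fun _ : Fin n => (Finset.univ : Finset Bool)),
          ∏ i : Fin n, Real.exp (-(β * cond (c i) ((i.val + 2 : ℕ) : ℝ) 0)) := by
        rw [Fintype.piFinset_univ]
    _ = ∏ i : Fin n, ∑ b : Bool, Real.exp (-(β * cond b ((i.val + 2 : ℕ) : ℝ) 0)) :=
      by
        exact (Finset.prod_univ_sum (fun _ : Fin n => (Finset.univ : Finset Bool))
          (fun i b => Real.exp (-(β * cond b ((i.val + 2 : ℕ) : ℝ) 0)))).symm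
    _ = ∏ i : Fin n, (1 + Real.exp (-(β * ((i.val + 2 : ℕ) : ℝ)))) := by
        refine Finset.prod_congr rfl fun i _ => ?_
        rw [Fintype.sum_bool]
        simp [add_comm]

lemma sum_pend (n : ℕ) (w : Bool) (β : ℝ) :
    ∑ μ : {μ : exBr.FinPath (n + 1) // pend μ = w},
        Real.exp (-(β * pathVal exF μ.1)) =
      ∏ i : Fin n, (1 + Real.exp (-(β * ((i.val + 2 : ℕ) : ℝ)))) := by
  rw [← sum_exp_bits n β]
  refine Fintype.sum_equiv (fiberEquiv n w) _ _ fun μ => ?_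
  have := pathVal_eq μ.1
  rw [this]
  rfl

end ExAux

namespace ExAux

/-- crossing bits with last bit forced -/
def cful {k : ℕ} (c : Fin k → Bool) (x : Bool) : ℕ → Bool :=
  fun i => if h : i < k then c ⟨i, h⟩ else if i = k then x else false

lemma snd_last {k : ℕ} (μ : exBr.FinPath (k + 2)) {v w : Bool}
    (hw : pend μ = w) (hv : through μ = v) :
    bits μ (Fin.last k) = xor v w := by
  have hv' : (μ.1 ⟨k + 1, Nat.lt_succ_self _⟩ : Bool × Bool).1 = v := hv
  have hw' : cond (μ.1 ⟨k + 1, Nat.lt_succ_self _⟩ : Bool × Bool).2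
      (!(μ.1 ⟨k + 1, Nat.lt_succ_self _⟩ : Bool × Bool).1)
      ((μ.1 ⟨k + 1, Nat.lt_succ_self _⟩ : Bool × Bool).1) = w := hw
  show (μ.1 ⟨k + 1, Nat.succ_lt_succ (Fin.last k).isLt⟩ : Bool × Bool).2 = xor v w
  subst hv'
  subst hw'
  cases h1 : (μ.1 ⟨k + 1, Nat.lt_succ_self _⟩ : Bool × Bool).2 <;>
    cases h2 : (μ.1 ⟨k + 1, Nat.lt_succ_self _⟩ : Bool × Bool).1 <;>
      simp_all

lemma bxc (a b : Bool) : xor (xor a b) b = a := by cases a <;> cases b <;> rfl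

lemma bcx (v w : Bool) : cond (xor v w) (!v) v = w := by cases v <;> cases w <;> rfl

lemma through_eq {k : ℕ} (μ : exBr.FinPath (k + 2)) :
    through μ = vtx (base μ) (cext (bits μ)) k := by
  conv_lhs => rw [← recon μ]
  rfl

noncomputable def fiberEquiv2 (k : ℕ) (w v : Bool) :
    {μ : exBr.FinPath (k + 2) // pend μ = w ∧ through μ = v} ≃ (Fin k → Bool) where
  toFun μ := fun i => bits μ.1 ⟨i.val, Nat.lt_succ_of_lt i.isLt⟩
  invFun c :=
    ⟨mkPath (k + 1) (xor v (vtx false (cful c (xor v w)) k)) (cful c (xor v w)), by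
      have hk : cful c (xor v w) k = xor v w := by
        simp [cful]
      have hthr : vtx (xor v (vtx false (cful c (xor v w)) k)) (cful c (xor v w)) k = v := by
        rw [vtx_eq_xor]
        exact bxc v _
      constructor
      · rw [pend_mkPath]
        show cond (cful c (xor v w) k) _ _ = w
        rw [hk, hthr]
        exact bcx v w
      · rw [through_mkPath, hthr]⟩
  left_inv := by
    rintro ⟨μ, hw, hv⟩
    apply Subtype.ext
    show mkPath (k + 1) _ _ = μ
    set c : Fin k → Bool := fun i => bits μ ⟨i.val, Nat.lt_succ_of_lt i.isLt⟩ with hc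
    have hagree : ∀ i, i < k + 1 → cful c (xor v w) i = cext (bits μ) i := by
      intro i hi
      rcases Nat.lt_or_ge i k with h | h
      · simp [cful, cext, h, Nat.lt_succ_of_lt h, hc]
      · have hik : i = k := Nat.le_antisymm (Nat.lt_succ_iff.mp hi) h
        have hlast : bits μ (Fin.last k) = xor v w := snd_last μ hw hv
        subst hik
        simp only [cful, cext, dif_neg (lt_irrefl i), if_pos rfl,
          dif_pos (Nat.lt_succ_self i), ← hlast]
        rfl
    have hvx : vtx false (cful c (xor v w)) k = vtx false (cext (bits μ)) k :=
      vtx_congr false fun i hi => hagree i (Nat.lt_succ_of_lt hi)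
    have hv2 : vtx (base μ) (cext (bits μ)) k = v := by rw [← through_eq μ, hv]
    have hb : xor v (vtx false (cful c (xor v w)) k) = base μ := by
      rw [hvx, ← hv2, vtx_eq_xor]
      exact bxc (base μ) _
    rw [mkPath_congr hb hagree]
    exact recon μ
  right_inv := by
    intro c
    funext i
    show cful c (xor v w) i.val = c i
    simp [cful, i.isLt]

lemma sum_pend_through (k : ℕ) (w v : Bool) (β : ℝ) :
    ∑ μ : {μ : exBr.FinPath (k + 2) // pend μ = w ∧ through μ = v},
        Real.exp (-(β * pathVal exF μ.1)) =
      Real.exp (-(β * (if v = w then 0 else ((k + 2 : ℕ) : ℝ)))) *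
        ∏ i : Fin k, (1 + Real.exp (-(β * ((i.val + 2 : ℕ) : ℝ)))) := by
  rw [← sum_exp_bits k β, Finset.mul_sum]
  refine Fintype.sum_equiv (fiberEquiv2 k w v) _ _ fun μ => ?_
  rw [← Real.exp_add]
  congr 1
  rw [pathVal_eq μ.1, Fin.sum_univ_castSucc]
  have hlast : bits μ.1 (Fin.last k) = xor v w := snd_last μ.1 μ.2.1 μ.2.2
  have h2 : (cond (bits μ.1 (Fin.last k)) (((Fin.last k).val + 2 : ℕ) : ℝ) 0) =
      (if v = w then 0 else ((k + 2 : ℕ) : ℝ)) := by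
    rw [hlast]
    cases v <;> cases w <;> simp
  have h3 : ∀ i : Fin k,
      cond (bits μ.1 i.castSucc) ((i.castSucc.val + 2 : ℕ) : ℝ) 0 =
        cond ((fiberEquiv2 k w v) μ i) ((i.val + 2 : ℕ) : ℝ) 0 := by
    intro i
    rfl
  rw [h2]
  rw [Finset.sum_congr rfl fun i _ => h3 i]
  ring

end ExAux

namespace ExAux

lemma prod_pos (n : ℕ) (β : ℝ) :
    0 < ∏ i : Fin n, (1 + Real.exp (-(β * ((i.val + 2 : ℕ) : ℝ)))) :=
  Finset.prod_pos fun i _ => by positivity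

lemma stoch_succ (k : ℕ) (β : ℝ) (v w : Bool) :
    stoch exBr exF β (k + 1) v w =
      (if v = w then 1 else Real.exp (-(β * (k + 2)))) /
        (1 + Real.exp (-(β * (k + 2)))) := by
  unfold stoch
  show (∑ μ : {μ : exBr.FinPath (k + 2) // pend μ = w ∧ through μ = v},
      Real.exp (-(β * pathVal exF μ.1))) /
    (∑ μ : {μ : exBr.FinPath (k + 1 + 1) // pend μ = w}, Real.exp (-(β * pathVal exF μ.1))) = _
  rw [sum_pend_through k w v β, sum_pend (k + 1) w β,
    Fin.prod_univ_castSucc]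
  have hcast : ∀ i : Fin k,
      (1 + Real.exp (-(β * (((i.castSucc).val + 2 : ℕ) : ℝ)))) =
        (1 + Real.exp (-(β * ((i.val + 2 : ℕ) : ℝ)))) := fun i => rfl
  rw [Finset.prod_congr rfl fun i _ => hcast i]
  rw [mul_comm (∏ i : Fin k, (1 + Real.exp (-(β * ((i.val + 2 : ℕ) : ℝ)))))
    (1 + Real.exp (-(β * (((Fin.last k).val + 2 : ℕ) : ℝ))))]
  rw [mul_div_mul_right _ _ (ne_of_gt (prod_pos k β))]
  have hk : (((Fin.last k).val + 2 : ℕ) : ℝ) = (k : ℝ) + 2 := by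
    simp [Fin.val_last]
  rw [hk]
  by_cases hvw : v = w
  · simp [hvw]
  · have : (((k + 2 : ℕ) : ℝ)) = (k : ℝ) + 2 := by push_cast; ring
    simp [hvw, this]

lemma pathVal_nonneg {n : ℕ} (μ : exBr.FinPath (n + 1)) : 0 ≤ pathVal exF μ := by
  rw [pathVal_eq]
  refine Finset.sum_nonneg fun i _ => ?_
  cases bits μ i <;> simp <;> positivity

lemma pend_straight (n : ℕ) (w : Bool) : pend (mkPath n w fun _ => false) = w := by
  rw [pend_mkPath]; exact vtx_false w n fun _ _ => rfl

lemma through_straight (k : ℕ) (w : Bool) :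
    through (mkPath (k + 1) w fun _ => false) = w := by
  rw [through_mkPath]; exact vtx_false w k fun _ _ => rfl

lemma pathVal_straight (n : ℕ) (w : Bool) :
    pathVal exF (mkPath n w fun _ => false) = 0 := by
  rw [pathVal_mkPath]; simp

lemma mmin_zero (j : ℕ) (w : Bool) : mmin exBr exF j w = 0 := by
  unfold mmin
  have h0 : (0 : ℝ) ∈ {x | ∃ μ : exBr.FinPath (j + 1), pend μ = w ∧ pathVal exF μ = x} :=
    ⟨mkPath j w fun _ => false, pend_straight j w, pathVal_straight j w⟩
  refine le_antisymm (csInf_le ⟨0, ?_⟩ h0) (le_csInf ⟨0, h0⟩ ?_) <;>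
    rintro x ⟨μ, -, hx⟩ <;> exact hx ▸ pathVal_nonneg μ

lemma val_zero_eq {j : ℕ} (μ : exBr.FinPath (j + 1)) {w : Bool} (hp : pend μ = w)
    (h0 : pathVal exF μ = 0) : μ = mkPath j w fun _ => false := by
  have hb : ∀ i : Fin j, bits μ i = false := by
    rw [pathVal_eq] at h0
    intro i
    have hnn : ∀ i ∈ Finset.univ, (0 : ℝ) ≤ cond (bits μ i) ((i.val + 2 : ℕ) : ℝ) 0 :=
      fun i _ => by cases bits μ i <;> simp <;> positivity
    have := (Finset.sum_eq_zero_iff_of_nonneg hnn).mp h0 i (Finset.mem_univ i)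
    cases hbi : bits μ i
    · rfl
    · rw [hbi] at this
      exfalso
      have hpos : (0 : ℝ) < (i.val : ℝ) + 2 := by positivity
      simp at this
      linarith
  have hcf : ∀ i < j, cext (bits μ) i = false := by
    intro i hi
    simp [cext, hi, hb ⟨i, hi⟩]
  have hpend : pend μ = base μ := by
    conv_lhs => rw [← recon μ]
    rw [pend_mkPath]
    exact vtx_false (base μ) j hcf
  have hbase : base μ = w := by rw [← hpend, hp]
  conv_lhs => rw [← recon μ]
  exact mkPath_congr hbase hcf

lemma card_denom (j : ℕ) (w : Bool) :
    Nat.card {μ : exBr.FinPath (j + 1) //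
      pend μ = w ∧ pathVal exF μ = mmin exBr exF j w} = 1 := by
  rw [mmin_zero, Nat.card_eq_one_iff_unique]
  constructor
  · exact ⟨fun a b => Subtype.ext
      ((val_zero_eq a.1 a.2.1 a.2.2).trans (val_zero_eq b.1 b.2.1 b.2.2).symm)⟩
  · exact ⟨⟨mkPath j w fun _ => false, pend_straight j w, pathVal_straight j w⟩⟩

lemma card_num_succ (k : ℕ) (v w : Bool) :
    Nat.card {μ : exBr.FinPath (k + 2) //
      pend μ = w ∧ through μ = v ∧ pathVal exF μ = mmin exBr exF (k + 1) w} =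
      if v = w then 1 else 0 := by
  rw [mmin_zero]
  by_cases hvw : v = w
  · subst hvw
    rw [if_pos rfl, Nat.card_eq_one_iff_unique]
    constructor
    · exact ⟨fun a b => Subtype.ext
        ((val_zero_eq a.1 a.2.1 a.2.2.2).trans (val_zero_eq b.1 b.2.1 b.2.2.2).symm)⟩
    · exact ⟨⟨mkPath (k + 1) v fun _ => false, pend_straight (k + 1) v,
        through_straight k v, pathVal_straight (k + 1) v⟩⟩
  · rw [if_neg hvw]
    have hE : IsEmpty {μ : exBr.FinPath (k + 2) //
        pend μ = w ∧ through μ = v ∧ pathVal exF μ = 0} := by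
      refine ⟨fun μ => hvw ?_⟩
      have h1 := val_zero_eq μ.1 μ.2.1 μ.2.2.2
      have h2 := μ.2.2.1
      rw [h1, through_straight k w] at h2
      exact h2.symm
    exact Nat.card_of_isEmpty
  
lemma stochLim_succ (k : ℕ) (v w : Bool) :
    stochLim exBr exF (k + 1) v w = if v = w then (1 : ℝ) else 0 := by
  unfold stochLim
  show ((Nat.card {μ : exBr.FinPath (k + 2) //
      pend μ = w ∧ through μ = v ∧ pathVal exF μ = mmin exBr exF (k + 1) w} : ℝ) /
    (Nat.card {μ : exBr.FinPath (k + 1 + 1) //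
      pend μ = w ∧ pathVal exF μ = mmin exBr exF (k + 1) w} : ℝ)) = _
  rw [card_num_succ, card_denom]
  by_cases hvw : v = w <;> simp [hvw]

lemma stoch_zero (β : ℝ) (v : exBr.V 0) (w : Bool) : stoch exBr exF β 0 v w = 1 := by
  unfold stoch
  show (∑ μ : {μ : exBr.FinPath 1 // pend μ = w ∧ through μ = v},
      Real.exp (-(β * pathVal exF μ.1))) /
    (∑ μ : {μ : exBr.FinPath 1 // pend μ = w}, Real.exp (-(β * pathVal exF μ.1))) = 1
  have hsum : ∑ μ : {μ : exBr.FinPath 1 // pend μ = w ∧ through μ = v},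
      Real.exp (-(β * pathVal exF μ.1)) =
      ∑ μ : {μ : exBr.FinPath 1 // pend μ = w}, Real.exp (-(β * pathVal exF μ.1)) := by
    refine Fintype.sum_equiv (Equiv.subtypeEquivRight fun μ => ?_) _ _ fun μ => rfl
    exact ⟨fun h => h.1, fun h => ⟨h, Subsingleton.elim _ _⟩⟩
  rw [hsum, sum_pend 0 w β]
  simp

lemma stochLim_zero (v : exBr.V 0) (w : Bool) : stochLim exBr exF 0 v w = 1 := by
  unfold stochLim
  show ((Nat.card {μ : exBr.FinPath 1 //
      pend μ = w ∧ through μ = v ∧ pathVal exF μ = mmin exBr exF 0 w} : ℝ) /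
    (Nat.card {μ : exBr.FinPath (0 + 1) //
      pend μ = w ∧ pathVal exF μ = mmin exBr exF 0 w} : ℝ)) = 1
  have h2 : Nat.card {μ : exBr.FinPath 1 //
      pend μ = w ∧ through μ = v ∧ pathVal exF μ = mmin exBr exF 0 w} = 1 := by
    rw [mmin_zero, Nat.card_eq_one_iff_unique]
    constructor
    · exact ⟨fun a b => Subtype.ext
        ((val_zero_eq a.1 a.2.1 a.2.2.2).trans (val_zero_eq b.1 b.2.1 b.2.2.2).symm)⟩
    · exact ⟨⟨mkPath 0 w fun _ => false, pend_straight 0 w, Subsingleton.elim _ _,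
        pathVal_straight 0 w⟩⟩
  rw [h2, card_denom 0 w]
  norm_num

end ExAux

namespace ExAux

lemma l1opNorm_const {m n : Type} [Fintype m] [Fintype n] [Nonempty n]
    (M : Matrix m n ℝ) (C : ℝ) (h : ∀ j, ∑ i, |M i j| = C) : l1opNorm M = C := by
  unfold l1opNorm
  simp only [h]
  exact ciSup_const

lemma l1_diff_succ (k : ℕ) (β : ℝ) :
    l1opNorm (stoch exBr exF β (k + 1) - stochLim exBr exF (k + 1)) =
      2 * Real.exp (-(β * (k + 2))) / (1 + Real.exp (-(β * (k + 2)))) := by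
  set x := Real.exp (-(β * (k + 2))) with hx
  have hx0 : 0 < x := Real.exp_pos _
  have habs : ∀ v w : Bool,
      |(stoch exBr exF β (k + 1) - stochLim exBr exF (k + 1)) v w| = x / (1 + x) := by
    intro v w
    rw [show (stoch exBr exF β (k + 1) - stochLim exBr exF (k + 1)) v w =
      stoch exBr exF β (k + 1) v w - stochLim exBr exF (k + 1) v w from rfl]
    rw [stoch_succ, stochLim_succ, ← hx]
    by_cases hvw : v = w
    · rw [if_pos hvw, if_pos hvw]
      have h1 : (1 : ℝ) / (1 + x) - 1 = -(x / (1 + x)) := by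
        field_simp
        ring
      rw [h1, abs_neg, abs_of_nonneg (by positivity)]
    · rw [if_neg hvw, if_neg hvw, sub_zero, abs_of_nonneg (by positivity)]
  have hcol : ∀ w : Bool, ∑ v : Bool,
      |(stoch exBr exF β (k + 1) - stochLim exBr exF (k + 1)) v w| =
        2 * x / (1 + x) := by
    intro w
    rw [Fintype.sum_bool, habs true w, habs false w]
    ring
  exact l1opNorm_const _ _ hcol

lemma l1_diff_zero (β : ℝ) :
    l1opNorm (stoch exBr exF β 0 - stochLim exBr exF 0) = 0 := by
  unfold l1opNorm
  have hcol : ∀ w : Bool, ∑ v : exBr.V 0,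
      |(stoch exBr exF β 0 - stochLim exBr exF 0) v w| = 0 := by
    intro w
    refine Finset.sum_eq_zero fun v _ => ?_
    rw [show (stoch exBr exF β 0 - stochLim exBr exF 0) v w =
      stoch exBr exF β 0 v w - stochLim exBr exF 0 v w from rfl]
    rw [stoch_zero, stochLim_zero, sub_self, abs_zero]
  exact l1opNorm_const _ _ hcol

lemma l1_nonneg (β : ℝ) (j : ℕ) :
    0 ≤ l1opNorm (stoch exBr exF β j - stochLim exBr exF j) := by
  cases j with
  | zero => rw [l1_diff_zero]
  | succ k =>
      rw [l1_diff_succ]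
      have := Real.exp_pos (-(β * (k + 2)))
      positivity

lemma l1_le (β : ℝ) (j : ℕ) :
    l1opNorm (stoch exBr exF β j - stochLim exBr exF j) ≤
      2 * Real.exp (-β) * Real.exp (-β) ^ j := by
  cases j with
  | zero =>
      rw [l1_diff_zero]
      have := Real.exp_pos (-β)
      positivity
  | succ k =>
      rw [l1_diff_succ]
      set x := Real.exp (-(β * (k + 2))) with hx
      have hx0 : 0 < x := Real.exp_pos _
      have hxr : x = Real.exp (-β) ^ (k + 2) := by
        rw [hx, ← Real.exp_nat_mul]
        congr 1
        push_cast
        ring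
      calc 2 * x / (1 + x) ≤ 2 * x := by
            apply div_le_self (by positivity) (by linarith)
        _ = 2 * Real.exp (-β) * Real.exp (-β) ^ (k + 1) := by
            rw [hxr]
            ring
 
lemma part3 (β : ℝ) (hβ : 0 < β) :
    Summable (fun j => l1opNorm (stoch exBr exF β j - stochLim exBr exF j)) ∧
      ∑' j, l1opNorm (stoch exBr exF β j - stochLim exBr exF j) ≤
        2 * Real.exp (-β) / (1 - Real.exp (-β)) := by
  set r := Real.exp (-β) with hr
  have hr0 : 0 < r := Real.exp_pos _
  have hr1 : r < 1 := by
    rw [hr, Real.exp_lt_one_iff]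
    linarith
  have hb : Summable (fun j : ℕ => 2 * r * r ^ j) :=
    (summable_geometric_of_lt_one hr0.le hr1).mul_left (2 * r)
  have hf : Summable (fun j => l1opNorm (stoch exBr exF β j - stochLim exBr exF j)) :=
    Summable.of_nonneg_of_le (l1_nonneg β) (l1_le β) hb
  refine ⟨hf, ?_⟩
  calc ∑' j, l1opNorm (stoch exBr exF β j - stochLim exBr exF j)
      ≤ ∑' j : ℕ, 2 * r * r ^ j := Summable.tsum_le_tsum (l1_le β) hf hb
    _ = 2 * r * (1 - r)⁻¹ := by
        rw [tsum_mul_left, tsum_geometric_of_lt_one hr0.le hr1]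
    _ = 2 * r / (1 - r) := by rw [div_eq_mul_inv]

lemma part4 :
    Filter.Tendsto
      (fun β : ℝ => ∑' j, l1opNorm (stoch exBr exF β j - stochLim exBr exF j))
      Filter.atTop (nhds 0) := by
  have hexp : Filter.Tendsto (fun β : ℝ => Real.exp (-β)) Filter.atTop (nhds 0) := by
    exact Real.tendsto_exp_neg_atTop_nhds_zero
  have hh : Filter.Tendsto (fun β : ℝ => 2 * Real.exp (-β) / (1 - Real.exp (-β)))
      Filter.atTop (nhds 0) := by
    have h2 : Filter.Tendsto (fun β : ℝ => 1 - Real.exp (-β)) Filter.atTop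
        (nhds (1 - 0)) := Filter.Tendsto.sub tendsto_const_nhds hexp
    have h3 := (hexp.const_mul 2).div h2 (by norm_num)
    rw [show (0:ℝ) = 2 * 0 / (1 - 0) by norm_num]
    exact h3
  refine tendsto_of_tendsto_of_tendsto_of_le_of_le' tendsto_const_nhds hh ?_ ?_
  · exact Filter.Eventually.of_forall fun β => tsum_nonneg fun j => l1_nonneg β j
  · filter_upwards [Filter.eventually_gt_atTop 0] with β hβ
    exact (part3 β hβ).2

end ExAux


/-- For the example diagram: the stochastic matrices are
`[[1/(1+e^{−βj}), e^{−βj}/(1+e^{−βj})],[e^{−βj}/(1+e^{−βj}), 1/(1+e^{−βj})]]`, their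
limits are the identity, and `Σ_j ‖Br(β)^{(j)} − \underline{Br}^{(j)}‖₁ ≤
2e^{−β}/(1−e^{−β})` for `β > 0`, which tends to `0` as `β → ∞`. -/
theorem stmt_19 :
    (∀ (k : ℕ) (β : ℝ) (v w : Bool),
      stoch exBr exF β (k + 1) v w =
        (if v = w then 1 else Real.exp (-(β * (k + 2)))) /
          (1 + Real.exp (-(β * (k + 2))))) ∧
    (∀ (k : ℕ) (v w : Bool),
      stochLim exBr exF (k + 1) v w = if v = w then (1 : ℝ) else 0) ∧
    (∀ β : ℝ, 0 < β →
      Summable (fun j => l1opNorm (stoch exBr exF β j - stochLim exBr exF j)) ∧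
      ∑' j, l1opNorm (stoch exBr exF β j - stochLim exBr exF j) ≤
        2 * Real.exp (-β) / (1 - Real.exp (-β))) ∧
    Filter.Tendsto
      (fun β : ℝ => ∑' j, l1opNorm (stoch exBr exF β j - stochLim exBr exF j))
      Filter.atTop (nhds 0) := by
  exact ⟨fun k β v w => ExAux.stoch_succ k β v w,
    fun k v w => ExAux.stochLim_succ k v w,
    fun β hβ => ExAux.part3 β hβ,
    ExAux.part4⟩
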